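/- For upsets β ⊆ α and any single-conclusion argument ⟨Γ, φ⟩: if ⟨Γ, φ⟩ is α-preservation valid then it is β-preservation valid. Dually, for upsets α ⊆ β and any single-premise argument ⟨φ, Δ⟩: if ⟨φ, Δ⟩ is α-preservation valid then it is β-preservation valid. -/

import Mathlib

/-- Propositional formulas: atoms, negation, disjunction. -/
inductive Fml : Type
  | atom : ℕ → Fml
  | neg : Fml → Fml
  | or : Fml → Fml → Fml
deriving DecidableEq

namespace Fml

def and (φ ψ : Fml) : Fml := neg (or (neg φ) (neg ψ))

def bot : Fml := and (atom 0) (neg (atom 0))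

def imp (φ ψ : Fml) : Fml := or (neg φ) ψ

def eval (v : ℕ → Bool) : Fml → Bool
  | atom n => v n
  | neg φ => !(eval v φ)
  | or φ ψ => (eval v φ) || (eval v ψ)

end Fml

/-- Two formulas are jointly classically unsatisfiable. -/
def Incompatible (φ ψ : Fml) : Prop :=
  ∀ v : ℕ → Bool, ¬(φ.eval v = true ∧ ψ.eval v = true)

/-- Classical (Set-Set) validity. -/
def ClValid (Γ Δ : Finset Fml) : Prop :=
  ∀ v : ℕ → Bool, (∀ γ ∈ Γ, γ.eval v = true) → ∃ δ ∈ Δ, δ.eval v = true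

/-- Classical single-conclusion entailment. -/
def ClEntails (Γ : Finset Fml) (φ : Fml) : Prop :=
  ∀ v : ℕ → Bool, (∀ γ ∈ Γ, γ.eval v = true) → φ.eval v = true

def ClConsistent (Γ : Finset Fml) : Prop :=
  ∃ v : ℕ → Bool, ∀ γ ∈ Γ, γ.eval v = true

def Tautology (φ : Fml) : Prop := ∀ v : ℕ → Bool, φ.eval v = true

/-- A probability distribution on formulas. -/
structure ProbDist where
  p : Fml → ℝ
  nonneg : ∀ φ, 0 ≤ p φ
  le_one : ∀ φ, p φ ≤ 1
  bot_eq : p Fml.bot = 0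
  neg_eq : ∀ φ, p (Fml.neg φ) = 1 - p φ
  add_eq : ∀ φ ψ, Incompatible φ ψ → p (Fml.or φ ψ) = p φ + p ψ

/-- A probabilistic model: worlds with classical valuations and a finitely
additive probability measure on subsets of worlds. -/
structure PModel where
  W : Type
  nonempty : Nonempty W
  val : W → ℕ → Bool
  μ : Set W → ℝ
  nonneg : ∀ A : Set W, 0 ≤ μ A
  empty_eq : μ (∅ : Set W) = 0
  univ_eq : μ (Set.univ : Set W) = 1
  add_eq : ∀ A B : Set W, Disjoint A B → μ (A ∪ B) = μ A + μ B

/-- Denotation of a formula in a model. -/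
def PModel.den (M : PModel) (φ : Fml) : Set M.W := {w | φ.eval (M.val w) = true}

/-- Induced probability of a formula in a model. -/
def PModel.prob (M : PModel) (φ : Fml) : ℝ := M.μ (M.den φ)

/-- An upset of [0,1]: contains 1, excludes 0, upward closed within [0,1]. -/
def IsUpset (α : Set ℝ) : Prop :=
  α ⊆ Set.Icc 0 1 ∧ (1 : ℝ) ∈ α ∧ (0 : ℝ) ∉ α ∧
    ∀ x ∈ α, ∀ y ∈ Set.Icc (0:ℝ) 1, x ≤ y → y ∈ α

/-- The mirror image of α. -/
def mirror (α : Set ℝ) : Set ℝ := {x ∈ Set.Icc (0:ℝ) 1 | 1 - x ∈ α}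

/-- The dual of α. -/
def dual (α : Set ℝ) : Set ℝ := Set.Icc (0:ℝ) 1 \ mirror α

/-- Conjunction of a finite set of formulas. -/
noncomputable def conj (Γ : Finset Fml) : Fml := Γ.toList.foldr Fml.and (Fml.neg Fml.bot)

/-- Disjunction of a finite set of formulas. -/
noncomputable def disj (Δ : Finset Fml) : Fml := Δ.toList.foldr Fml.or Fml.bot

/-- Disjunction of a list of formulas. -/
def disjList (l : List Fml) : Fml := l.foldr Fml.or Fml.bot

/-- α-preservation validity (over probability distributions). -/
def PresValid (α : Set ℝ) (Γ Δ : Finset Fml) : Prop :=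
  ∀ P : ProbDist, (∀ γ ∈ Γ, P.p γ ∈ α) → ∃ δ ∈ Δ, P.p δ ∈ α

/-- α-preservation validity (over probabilistic models). -/
def PresValidM (α : Set ℝ) (Γ Δ : Finset Fml) : Prop :=
  ∀ M : PModel, (∀ γ ∈ Γ, M.prob γ ∈ α) → ∃ δ ∈ Δ, M.prob δ ∈ α

/-- α-symmetric validity. -/
def SymValid (α : Set ℝ) (Γ Δ : Finset Fml) : Prop :=
  ∀ P : ProbDist, (∀ γ ∈ Γ, P.p γ ∈ α) → ∃ δ ∈ Δ, P.p δ ∉ mirror α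

/-- α-satisfiability of a finite set of formulas. -/
def Satis (α : Set ℝ) (Γ : Finset Fml) : Prop :=
  ∃ P : ProbDist, ∀ γ ∈ Γ, P.p γ ∈ α

section Helpers

lemma bot_eval_false (w : ℕ → Bool) : Fml.bot.eval w = false := by
  simp [Fml.bot, Fml.and, Fml.eval]

lemma ProbDist.mono (P : ProbDist) {φ ψ : Fml}
    (h : ∀ v, φ.eval v = true → ψ.eval v = true) : P.p φ ≤ P.p ψ := by
  have hinc : Incompatible φ (Fml.neg ψ) := by
    rintro v ⟨h1, h2⟩
    simp only [Fml.eval, Bool.not_eq_true'] at h2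
    rw [h v h1] at h2; exact Bool.noConfusion h2
  have hadd := P.add_eq φ (Fml.neg ψ) hinc
  have h1 := P.le_one (Fml.or φ (Fml.neg ψ))
  rw [hadd, P.neg_eq] at h1; linarith

lemma ProbDist.unsat_eq_zero (P : ProbDist) {φ : Fml}
    (h : ∀ v, φ.eval v = false) : P.p φ = 0 := by
  have h1 : P.p φ ≤ P.p Fml.bot := P.mono (fun v hv => by rw [h v] at hv; exact absurd hv (by simp))
  have := P.nonneg φ
  rw [P.bot_eq] at h1; linarith

lemma ProbDist.taut_eq_one (P : ProbDist) {φ : Fml}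
    (h : ∀ v, φ.eval v = true) : P.p φ = 1 := by
  have h1 : P.p (Fml.neg φ) = 0 := P.unsat_eq_zero (fun v => by
    simp only [Fml.eval, Bool.not_eq_false']; exact h v)
  have := P.neg_eq φ; rw [h1] at this; linarith

lemma upset_bddBelow {α : Set ℝ} (hα : IsUpset α) : BddBelow α :=
  ⟨0, fun y hy => (hα.1 hy).1⟩

lemma upset_le_of_mem {α : Set ℝ} (hα : IsUpset α) {x : ℝ} (hx : x ∈ α) : sInf α ≤ x :=
  csInf_le (upset_bddBelow hα) hx

lemma upset_mem_of_gt {α : Set ℝ} (hα : IsUpset α) {x : ℝ} (hx0 : 0 ≤ x) (hx1 : x ≤ 1)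
    (h : sInf α < x) : x ∈ α := by
  obtain ⟨a, ha, hax⟩ := exists_lt_of_csInf_lt ⟨1, hα.2.1⟩ h
  exact hα.2.2.2 a ha x ⟨hx0, hx1⟩ hax.le

lemma upset_inf_nonneg {α : Set ℝ} (hα : IsUpset α) : 0 ≤ sInf α :=
  le_csInf ⟨1, hα.2.1⟩ fun y hy => (hα.1 hy).1

lemma upset_inf_le_one {α : Set ℝ} (hα : IsUpset α) : sInf α ≤ 1 :=
  csInf_le (upset_bddBelow hα) hα.2.1

/-- Distribution given by averaging finitely many valuations. -/
noncomputable def avgDist {n : ℕ} (hn : 0 < n) (v : Fin n → ℕ → Bool) : ProbDist where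
  p ψ := (Finset.univ.filter (fun i => ψ.eval (v i) = true)).card / n
  nonneg ψ := by positivity
  le_one ψ := by
    rw [div_le_one (by exact_mod_cast hn)]
    have := Finset.card_filter_le (Finset.univ : Finset (Fin n))
      (fun i => ψ.eval (v i) = true)
    simp only [Finset.card_univ, Fintype.card_fin] at this
    exact_mod_cast this
  bot_eq := by simp [bot_eval_false]
  neg_eq ψ := by
    have hsplit := Finset.card_filter_add_card_filter_not
      (s := (Finset.univ : Finset (Fin n))) (p := fun i => ψ.eval (v i) = true)
    simp only [Finset.card_univ, Fintype.card_fin] at hsplit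
    have hneg : (Finset.univ.filter (fun i => (Fml.neg ψ).eval (v i) = true))
        = (Finset.univ.filter (fun i => ¬ (ψ.eval (v i) = true))) := by
      apply Finset.filter_congr; intro i _
      simp [Fml.eval]
    rw [hneg]
    have hn' : (n : ℝ) ≠ 0 := by exact_mod_cast hn.ne'
    have hcast : ((Finset.univ.filter (fun i => ¬ (ψ.eval (v i) = true))).card : ℝ)
        = n - ((Finset.univ.filter (fun i => ψ.eval (v i) = true)).card : ℝ) := by
      have h2 : ((Finset.univ.filter (fun i => ψ.eval (v i) = true)).card : ℝ)
          + ((Finset.univ.filter (fun i => ¬ (ψ.eval (v i) = true))).card : ℝ) = n := by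
        exact_mod_cast congrArg (Nat.cast : ℕ → ℝ) hsplit
      linarith
    rw [hcast]
    field_simp
  add_eq φ ψ h := by
    have hunion : (Finset.univ.filter (fun i => (Fml.or φ ψ).eval (v i) = true))
        = (Finset.univ.filter (fun i => φ.eval (v i) = true))
          ∪ (Finset.univ.filter (fun i => ψ.eval (v i) = true)) := by
      ext i
      simp [Fml.eval, Bool.or_eq_true]
    have hdisj : Disjoint (Finset.univ.filter (fun i => φ.eval (v i) = true))
        (Finset.univ.filter (fun i => ψ.eval (v i) = true)) := by
      rw [Finset.disjoint_left]
      intro i hi1 hi2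
      simp only [Finset.mem_filter] at hi1 hi2
      exact h (v i) ⟨hi1.2, hi2.2⟩
    rw [hunion, Finset.card_union_of_disjoint hdisj]
    push_cast
    ring

/-- Convex combination of two distributions. -/
noncomputable def mixDist (s : ℝ) (h0 : 0 ≤ s) (h1 : s ≤ 1) (P Q : ProbDist) : ProbDist where
  p ψ := s * P.p ψ + (1 - s) * Q.p ψ
  nonneg ψ := by
    have := P.nonneg ψ; have := Q.nonneg ψ; nlinarith
  le_one ψ := by
    have := P.le_one ψ; have := Q.le_one ψ; nlinarith
  bot_eq := by simp [P.bot_eq, Q.bot_eq]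
  neg_eq ψ := by rw [P.neg_eq, Q.neg_eq]; ring
  add_eq φ ψ h := by rw [P.add_eq _ _ h, Q.add_eq _ _ h]; ring

end Helpers
section Bounds
variable {n : ℕ} (hn : 0 < n) (v : Fin n → ℕ → Bool) (ψ : Fml)

lemma avgDist_eq_zero (h : ∀ i, ψ.eval (v i) = false) : (avgDist hn v).p ψ = 0 := by
  have he : (Finset.univ.filter (fun i => ψ.eval (v i) = true)) = ∅ := by
    apply Finset.filter_false_of_mem; intro i _; simp [h i]
  simp [avgDist, he]

lemma avgDist_eq_one (h : ∀ i, ψ.eval (v i) = true) : (avgDist hn v).p ψ = 1 := by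
  have he : (Finset.univ.filter (fun i => ψ.eval (v i) = true)) = Finset.univ := by
    apply Finset.filter_true_of_mem; intro i _; exact h i
  have hn' : (n : ℝ) ≠ 0 := by exact_mod_cast hn.ne'
  simp [avgDist, he, hn']

lemma avgDist_ge (i : Fin n) (h : ψ.eval (v i) = true) : 1 / n ≤ (avgDist hn v).p ψ := by
  have hcard : 1 ≤ (Finset.univ.filter (fun j => ψ.eval (v j) = true)).card :=
    Finset.card_pos.mpr ⟨i, by simp [h]⟩
  have hc : (1:ℝ) ≤ ((Finset.univ.filter (fun j => ψ.eval (v j) = true)).card : ℝ) := by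
    exact_mod_cast hcard
  have hn' : (0:ℝ) < n := by exact_mod_cast hn
  show (1:ℝ)/n ≤ ((Finset.univ.filter (fun j => ψ.eval (v j) = true)).card : ℝ) / n
  gcongr

lemma avgDist_le (i : Fin n) (h : ψ.eval (v i) = false) : (avgDist hn v).p ψ ≤ 1 - 1 / n := by
  have hsub : (Finset.univ.filter (fun j => ψ.eval (v j) = true))
      ⊆ Finset.univ.erase i := by
    intro j hj
    simp only [Finset.mem_filter] at hj
    apply Finset.mem_erase.mpr
    refine ⟨?_, Finset.mem_univ j⟩
    rintro rfl; rw [h] at hj; exact absurd hj.2 (by simp)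
  have hcard := Finset.card_le_card hsub
  rw [Finset.card_erase_of_mem (Finset.mem_univ i)] at hcard
  simp only [Finset.card_univ, Fintype.card_fin] at hcard
  have hn' : (0:ℝ) < n := by exact_mod_cast hn
  have hc : ((Finset.univ.filter (fun j => ψ.eval (v j) = true)).card : ℝ) ≤ (n:ℝ) - 1 := by
    have : ((Finset.univ.filter (fun j => ψ.eval (v j) = true)).card : ℝ) ≤ ((n-1 : ℕ) : ℝ) := by
      exact_mod_cast hcard
    calc _ ≤ ((n-1 : ℕ) : ℝ) := this
    _ ≤ (n:ℝ) - 1 := by push_cast [Nat.cast_sub hn]; linarith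
  show ((Finset.univ.filter (fun j => ψ.eval (v j) = true)).card : ℝ) / n ≤ 1 - 1/n
  rw [div_le_iff₀ hn']
  have : (1 - 1/(n:ℝ)) * n = n - 1 := by field_simp
  rw [this]; exact hc

end Bounds
lemma part1 (α β : Set ℝ) (hα : IsUpset α) (hβ : IsUpset β) (hsub : β ⊆ α)
    (Γ : Finset Fml) (φ : Fml) (hval : PresValid α Γ {φ}) : PresValid β Γ {φ} := by
  classical
  intro P hprem
  simp only [Finset.mem_singleton, exists_eq_left]
  by_contra hpβ
  have hprem' : ∀ γ ∈ Γ, P.p γ ∈ α := fun γ hγ => hsub (hprem γ hγ)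
  have hφα : P.p φ ∈ α := by
    have := hval P hprem'
    simpa using this
  set p := P.p φ with hp
  have hpIcc : p ∈ Set.Icc (0:ℝ) 1 := hα.1 hφα
  have hp0 : 0 < p := lt_of_le_of_ne hpIcc.1 (by rintro h; exact hα.2.2.1 (h ▸ hφα))
  have hgt : ∀ γ ∈ Γ, p < P.p γ := by
    intro γ hγ
    by_contra hle
    push_neg at hle
    exact hpβ (hβ.2.2.2 _ (hprem γ hγ) p hpIcc hle)
  have hnent : ∀ γ ∈ Γ, ∃ v, γ.eval v = true ∧ φ.eval v = false := by
    intro γ hγ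
    by_contra hno
    push_neg at hno
    have hle : P.p γ ≤ p := P.mono (fun v hv => by
      have := hno v hv; revert this; cases φ.eval v <;> simp)
    exact absurd (hgt γ hγ) (not_lt.mpr hle)
  rcases Finset.eq_empty_or_nonempty Γ with rfl | hne
  · by_cases htaut : ∀ v, φ.eval v = true
    · exact hpβ (by rw [hp, P.taut_eq_one htaut]; exact hβ.2.1)
    · push_neg at htaut
      obtain ⟨v, hv⟩ := htaut
      have hv' : φ.eval v = false := by revert hv; cases φ.eval v <;> simp
      have h0 := hval (avgDist one_pos (fun _ => v)) (by simp)
      simp only [Finset.mem_singleton, exists_eq_left] at h0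
      rw [avgDist_eq_zero _ _ _ (fun _ => hv')] at h0
      exact hα.2.2.1 h0
  · have hln : 0 < Γ.toList.length := by
      rw [Finset.length_toList]; exact Finset.card_pos.mpr hne
    have hmem : ∀ i : Fin Γ.toList.length, Γ.toList.get i ∈ Γ := fun i =>
      Finset.mem_toList.mp (Γ.toList.get_mem i)
    set g : Fml → (ℕ → Bool) := fun γ =>
      if h : ∃ v, γ.eval v = true ∧ φ.eval v = false then h.choose else (fun _ => true)
      with hgdef
    have hg : ∀ γ ∈ Γ, γ.eval (g γ) = true ∧ φ.eval (g γ) = false := by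
      intro γ hγ
      have h := hnent γ hγ
      simp only [hgdef, dif_pos h]
      exact h.choose_spec
    set w : Fin Γ.toList.length → ℕ → Bool := fun i => g (Γ.toList.get i) with hw
    set Q := avgDist hln w with hQdef
    have hQφ : Q.p φ = 0 := avgDist_eq_zero hln w φ (fun i => (hg _ (hmem i)).2)
    have hQγ : ∀ γ ∈ Γ, 1 / (Γ.toList.length : ℝ) ≤ Q.p γ := by
      intro γ hγ
      obtain ⟨i, hi⟩ := List.mem_iff_get.mp (Finset.mem_toList.mpr hγ)
      apply avgDist_ge hln w γ i
      show γ.eval (g (Γ.toList.get i)) = true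
      rw [hi]
      exact (hg γ hγ).1
    have hcp : sInf α ≤ p := upset_le_of_mem hα hφα
    rcases eq_or_lt_of_le (upset_inf_nonneg hα) with hc0 | hcpos
    · have h0 := hval Q (fun γ hγ => upset_mem_of_gt hα (Q.nonneg γ) (Q.le_one γ)
        (by rw [← hc0]; exact lt_of_lt_of_le (by positivity) (hQγ γ hγ)))
      simp only [Finset.mem_singleton, exists_eq_left] at h0
      rw [hQφ] at h0
      exact hα.2.2.1 h0
    · set c := sInf α with hc
      set m := Γ.inf' hne P.p with hm
      have hmle : ∀ γ ∈ Γ, m ≤ P.p γ := fun γ hγ => Finset.inf'_le _ hγ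
      obtain ⟨γ0, hγ0, hmeq⟩ := Finset.exists_mem_eq_inf' hne P.p
      have hpm : p < m := by rw [hm, hmeq]; exact hgt γ0 hγ0
      set s := (c/m + c/p)/2 with hs
      have hm0 : 0 < m := hp0.trans hpm
      have hs1 : c/m < c/p := div_lt_div_of_pos_left hcpos hp0 hpm
      have hslb : c/m < s := by rw [hs]; linarith
      have hsub2 : s < c/p := by rw [hs]; linarith
      have hs0 : 0 < s := lt_trans (by positivity) hslb
      have hsle1 : s ≤ 1 := le_of_lt (lt_of_lt_of_le hsub2 (by rw [div_le_one hp0]; exact hcp))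
      set P' := mixDist s hs0.le hsle1 P Q with hP'
      have hP'φ : P'.p φ = s * p := by
        show s * P.p φ + (1-s) * Q.p φ = s * p
        rw [hQφ, ← hp]; ring
      have hγ' : ∀ γ ∈ Γ, P'.p γ ∈ α := by
        intro γ hγ
        apply upset_mem_of_gt hα (P'.nonneg γ) (P'.le_one γ)
        have h1 : c < s * m := by rw [div_lt_iff₀ hm0] at hslb; linarith
        have h2 : s * m ≤ s * P.p γ := mul_le_mul_of_nonneg_left (hmle γ hγ) hs0.le
        have h3 : 0 ≤ (1-s) * Q.p γ := mul_nonneg (by linarith) (Q.nonneg γ)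
        have heq : P'.p γ = s * P.p γ + (1-s) * Q.p γ := rfl
        rw [← hc, heq]; linarith
      have hφ' : P'.p φ ∉ α := by
        intro hmem2
        have hge := upset_le_of_mem hα hmem2
        rw [hP'φ, ← hc] at hge
        have hlt : s * p < c := by
          have h4 : s * p < (c/p) * p := by nlinarith
          have h5 : (c/p) * p = c := by field_simp
          linarith
        linarith
      have h0 := hval P' hγ'
      simp only [Finset.mem_singleton, exists_eq_left] at h0
      exact hφ' h0
lemma part2 (α β : Set ℝ) (hα : IsUpset α) (hβ : IsUpset β) (hsub : α ⊆ β)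
    (φ : Fml) (Δ : Finset Fml) (hval : PresValid α {φ} Δ) : PresValid β {φ} Δ := by
  classical
  intro P hprem
  have hpβ : P.p φ ∈ β := hprem φ (Finset.mem_singleton_self φ)
  by_contra hfail
  push_neg at hfail
  set p := P.p φ with hp
  have hp0 : 0 < p := lt_of_le_of_ne (P.nonneg φ) (by rintro h; exact hβ.2.2.1 (h ▸ hpβ))
  have hsat : ∃ v, φ.eval v = true := by
    by_contra hno
    push_neg at hno
    have hz : p = 0 := P.unsat_eq_zero (fun v => by
      have := hno v; revert this; cases φ.eval v <;> simp)
    exact hp0.ne' hz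
  by_cases hpα : p ∈ α
  · obtain ⟨δ, hδ, hδα⟩ := hval P (by
      intro γ hγ; rw [Finset.mem_singleton] at hγ; rw [hγ]; exact hpα)
    exact hfail δ hδ (hsub hδα)
  · have hpcα : p ≤ sInf α :=
      le_of_not_gt (fun h => hpα (upset_mem_of_gt hα (P.nonneg φ) (P.le_one φ) h))
    have hlt : ∀ δ ∈ Δ, P.p δ < p := by
      intro δ hδ
      by_contra hge; push_neg at hge
      exact hfail δ hδ (hβ.2.2.2 p hpβ _ ⟨P.nonneg δ, P.le_one δ⟩ hge)
    have hnent : ∀ δ ∈ Δ, ∃ v, φ.eval v = true ∧ δ.eval v = false := by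
      intro δ hδ
      by_contra hno; push_neg at hno
      have hle : p ≤ P.p δ := P.mono (fun v hv => by
        have := hno v hv; revert this; cases δ.eval v <;> simp)
      exact absurd (hlt δ hδ) (not_lt.mpr hle)
    rcases Finset.eq_empty_or_nonempty Δ with rfl | hne
    · obtain ⟨v, hv⟩ := hsat
      obtain ⟨δ, hδ, _⟩ := hval (avgDist one_pos (fun _ => v)) (by
        intro γ hγ; rw [Finset.mem_singleton] at hγ; rw [hγ]
        rw [avgDist_eq_one one_pos _ _ (fun _ => hv)]
        exact hα.2.1)
      exact absurd hδ (by simp)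
    · have hln : 0 < Δ.toList.length := by
        rw [Finset.length_toList]; exact Finset.card_pos.mpr hne
      have hmem : ∀ i : Fin Δ.toList.length, Δ.toList.get i ∈ Δ := fun i =>
        Finset.mem_toList.mp (Δ.toList.get_mem i)
      set g : Fml → (ℕ → Bool) := fun δ =>
        if h : ∃ v, φ.eval v = true ∧ δ.eval v = false then h.choose else (fun _ => true)
        with hgdef
      have hg : ∀ δ ∈ Δ, φ.eval (g δ) = true ∧ δ.eval (g δ) = false := by
        intro δ hδ
        have h := hnent δ hδ
        simp only [hgdef, dif_pos h]
        exact h.choose_spec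
      set w : Fin Δ.toList.length → ℕ → Bool := fun i => g (Δ.toList.get i) with hw
      set Q := avgDist hln w with hQdef
      have hQφ : Q.p φ = 1 := avgDist_eq_one hln w φ (fun i => (hg _ (hmem i)).1)
      have hQδ : ∀ δ ∈ Δ, Q.p δ ≤ 1 - 1 / (Δ.toList.length : ℝ) := by
        intro δ hδ
        obtain ⟨i, hi⟩ := List.mem_iff_get.mp (Finset.mem_toList.mpr hδ)
        apply avgDist_le hln w δ i
        show δ.eval (g (Δ.toList.get i)) = false
        rw [hi]; exact (hg δ hδ).2
      have hcα1 : sInf α ≤ 1 := upset_inf_le_one hα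
      rcases eq_or_lt_of_le hcα1 with hc1 | hclt
      · obtain ⟨δ, hδ, hδα⟩ := hval Q (by
          intro γ hγ; rw [Finset.mem_singleton] at hγ; rw [hγ, hQφ]; exact hα.2.1)
        have hge := upset_le_of_mem hα hδα
        have h2 := hQδ δ hδ
        have h3 : 0 < 1 / (Δ.toList.length:ℝ) := by positivity
        linarith
      · set C := 1 - sInf α with hC
        have hC0 : 0 < C := by rw [hC]; linarith
        set q := 1 - p with hq
        have hCq : C ≤ q := by rw [hC, hq]; linarith
        have hq0 : 0 < q := lt_of_lt_of_le hC0 hCq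
        set M := Δ.sup' hne P.p with hM
        have hMge : ∀ δ ∈ Δ, P.p δ ≤ M := fun δ hδ => Finset.le_sup' _ hδ
        obtain ⟨δ0, hδ0, hMeq⟩ := Finset.exists_mem_eq_sup' hne P.p
        have hMp : M < p := by rw [hM, hMeq]; exact hlt δ0 hδ0
        set m := 1 - M with hm
        have hqm : q < m := by rw [hq, hm]; linarith
        have hm0 : 0 < m := hq0.trans hqm
        set s := (C/m + C/q)/2 with hs
        have hs1 : C/m < C/q := div_lt_div_of_pos_left hC0 hq0 hqm
        have hslb : C/m < s := by rw [hs]; linarith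
        have hsub2 : s < C/q := by rw [hs]; linarith
        have hs0 : 0 < s := lt_trans (by positivity) hslb
        have hsle1 : s ≤ 1 := le_of_lt (lt_of_lt_of_le hsub2 (by
          rw [div_le_one hq0]; exact hCq))
        set P' := mixDist s hs0.le hsle1 P Q with hP'
        have hP'φ : P'.p φ = 1 - s * q := by
          show s * P.p φ + (1-s) * Q.p φ = 1 - s * q
          rw [hQφ, ← hp, hq]; ring
        have hφ' : P'.p φ ∈ α := by
          apply upset_mem_of_gt hα (P'.nonneg φ) (P'.le_one φ)
          have h5 : (C/q) * q = C := by field_simp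
          have h4 : s * q < C := by nlinarith
          rw [hP'φ]
          linarith
        have hδ' : ∀ δ ∈ Δ, P'.p δ ∉ α := by
          intro δ hδ hmem2
          have hge := upset_le_of_mem hα hmem2
          have heq : P'.p δ = s * P.p δ + (1-s) * Q.p δ := rfl
          have h6 : Q.p δ ≤ 1 := Q.le_one δ
          have h8 : s * m ≤ s * (1 - P.p δ) :=
            mul_le_mul_of_nonneg_left (by have := hMge δ hδ; rw [hm]; linarith) hs0.le
          have h9 : C < s * m := by rw [div_lt_iff₀ hm0] at hslb; linarith
          have h10 : 0 ≤ (1-s) * (1 - Q.p δ) := mul_nonneg (by linarith) (by linarith)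
          have h11 : P'.p δ = 1 - (s * (1 - P.p δ) + (1-s) * (1 - Q.p δ)) := by
            rw [heq]; ring
          rw [h11] at hge
          linarith
        obtain ⟨δ, hδ, hδα⟩ := hval P' (by
          intro γ hγ; rw [Finset.mem_singleton] at hγ; rw [hγ]; exact hφ')
        exact hδ' δ hδ hδα
/-- narrowing the upset preserves Set-Fmla preservation validity;
widening the upset preserves Fmla-Set preservation validity. -/
theorem stmt9 :
    (∀ α β : Set ℝ, IsUpset α → IsUpset β → β ⊆ α →
      ∀ (Γ : Finset Fml) (φ : Fml), PresValid α Γ {φ} → PresValid β Γ {φ}) ∧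
    (∀ α β : Set ℝ, IsUpset α → IsUpset β → α ⊆ β →
      ∀ (φ : Fml) (Δ : Finset Fml), PresValid α {φ} Δ → PresValid β {φ} Δ) := by
  exact ⟨part1, part2⟩
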